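/- If p is an odd prime, then h(p·(p+1)) = 2 and h((p−1)·p) = 2. -/
import Mathlib

/-- The set `A_n` of pairs `(x, y)` of positive integers with `n = x(x+y)` and `1 ≤ y ≤ x-1`. -/
def lerchA (n : ℕ) : Finset (ℕ × ℕ) :=
  (Finset.range (n + 1) ×ˢ Finset.range (n + 1)).filter
    (fun p => 0 < p.1 ∧ 1 ≤ p.2 ∧ p.2 ≤ p.1 - 1 ∧ n = p.1 * (p.1 + p.2))

/-- The set `B_n` of positive integers `x` with `n = x²`. -/
def lerchB (n : ℕ) : Finset ℕ :=
  (Finset.range (n + 1)).filter (fun x => 0 < x ∧ n = x ^ 2)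

/-- The set `C_n` of positive integers `x` with `n = 2x²`. -/
def lerchC (n : ℕ) : Finset ℕ :=
  (Finset.range (n + 1)).filter (fun x => 0 < x ∧ n = 2 * x ^ 2)

/-- `h(n) = 2·|A_n| + |B_n| + |C_n|`, the `n`-th coefficient of the half Lerch sum. -/
def lerchh (n : ℕ) : ℕ := 2 * (lerchA n).card + (lerchB n).card + (lerchC n).card

lemma kk_cases (k : ℕ) : k * k = 0 ∨ k * k = 1 ∨ 4 ≤ k * k := by
  rcases k with _ | _ | k
  · left; rfl
  · right; left; rfl
  · right; right; nlinarith

lemma lerchA_eq₁ (p : ℕ) (hp : p.Prime) (h3 : 3 ≤ p) :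
    lerchA (p * (p + 1)) = {(p, 1)} := by
  ext ⟨x, y⟩
  simp only [lerchA, Finset.mem_filter, Finset.mem_product, Finset.mem_range,
    Finset.mem_singleton, Prod.mk.injEq]
  constructor
  · rintro ⟨⟨hx, hy⟩, hx0, hy1, hyx, heq⟩
    have hylt : y < x := by omega
    have hdvd : p ∣ x * (x + y) := ⟨p + 1, heq.symm⟩
    rcases hp.dvd_mul.mp hdvd with h | h
    · obtain ⟨k, rfl⟩ := h
      have hk : p + 1 = k * (p * k + y) :=
        Nat.eq_of_mul_eq_mul_left hp.pos (by linarith [heq])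
      have hk0 : 0 < k := by
        rcases Nat.eq_zero_or_pos k with rfl | h
        · simp at hx0
        · exact h
      rcases kk_cases k with h0 | h1 | h4
      · nlinarith
      · have hk1 : k = 1 := by nlinarith
        subst hk1
        constructor
        · omega
        · nlinarith
      · nlinarith
    · exfalso
      obtain ⟨m, hm⟩ := h
      have hx' : p + 1 = x * m := by
        have : p * (p + 1) = p * (x * m) := by rw [heq, hm]; ring
        exact Nat.eq_of_mul_eq_mul_left hp.pos this
      have hm0 : 0 < m := Nat.pos_of_ne_zero (by rintro rfl; simp at hx')
      -- y ≥ 1 : x + 1 ≤ p*m ; y < x : p*m ≤ 2x - 1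
      have h1 : x + 1 ≤ p * m := by omega
      have h2 : p * m + 1 ≤ 2 * x := by omega
      rcases kk_cases m with h0 | h1' | h4
      · nlinarith
      · have : m = 1 := by nlinarith
        subst this
        omega
      · nlinarith
  · rintro ⟨rfl, rfl⟩
    refine ⟨⟨by nlinarith, by nlinarith⟩, by omega, le_refl _, by omega, by ring⟩

lemma lerchA_eq₂ (p : ℕ) (hp : p.Prime) (h3 : 3 ≤ p) :
    lerchA ((p - 1) * p) = {(p - 1, 1)} := by
  obtain ⟨a, rfl⟩ : ∃ a, p = a + 1 := ⟨p - 1, by omega⟩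
  have ha2 : 2 ≤ a := by omega
  have hsub : a + 1 - 1 = a := by omega
  rw [hsub]
  ext ⟨x, y⟩
  simp only [lerchA, Finset.mem_filter, Finset.mem_product, Finset.mem_range,
    Finset.mem_singleton, Prod.mk.injEq]
  constructor
  · rintro ⟨⟨hx, hy⟩, hx0, hy1, hyx, heq⟩
    have hylt : y < x := by omega
    have hdvd : (a + 1) ∣ x * (x + y) := ⟨a, by rw [← heq]; ring⟩
    rcases hp.dvd_mul.mp hdvd with h | h
    · exfalso
      obtain ⟨k, rfl⟩ := h
      have hk0 : 0 < k := by
        rcases Nat.eq_zero_or_pos k with rfl | h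
        · simp at hx0
        · exact h
      have ha : a = k * ((a + 1) * k + y) :=
        Nat.eq_of_mul_eq_mul_left (show 0 < a + 1 by omega)
          (by rw [mul_comm (a + 1) a, heq]; ring)
      nlinarith
    · obtain ⟨m, hm⟩ := h
      have hx' : a = x * m := by
        have : (a + 1) * a = (a + 1) * (x * m) := by rw [mul_comm (a+1) a, heq, hm]; ring
        exact Nat.eq_of_mul_eq_mul_left (by omega) this
      have hm0 : 0 < m := Nat.pos_of_ne_zero (by rintro rfl; simp at hx'; omega)
      have h1 : x + 1 ≤ (a + 1) * m := by omega
      have h2 : (a + 1) * m + 1 ≤ 2 * x := by omega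
      rcases kk_cases m with h0 | h1' | h4
      · nlinarith
      · have : m = 1 := by nlinarith
        subst this
        constructor
        · omega
        · omega
      · nlinarith
  · rintro ⟨rfl, rfl⟩
    refine ⟨⟨by nlinarith, by nlinarith⟩, by omega, le_refl _, by omega, by ring⟩

lemma lerchB_empty (p n k : ℕ) (hp : p.Prime) (h3 : 3 ≤ p)
    (hn : n = p * k) (hk : ¬ p ∣ k) (hk' : k ≤ p + 1) : lerchB n = ∅ := by
  rw [Finset.eq_empty_iff_forall_notMem]
  intro x hx
  simp only [lerchB, Finset.mem_filter, Finset.mem_range] at hx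
  obtain ⟨_, hx0, heq⟩ := hx
  have hdvd : p ∣ x := hp.dvd_of_dvd_pow (n := 2) ⟨k, by rw [← heq, hn]⟩
  obtain ⟨t, rfl⟩ := hdvd
  have : k = p * (t * t) := by
    have : p * k = p * (p * (t * t)) := by rw [← hn, heq]; ring
    exact Nat.eq_of_mul_eq_mul_left hp.pos this
  exact hk ⟨t * t, this⟩

lemma lerchC_empty (p n k : ℕ) (hp : p.Prime) (h3 : 3 ≤ p)
    (hn : n = p * k) (hk : ¬ p ∣ k) : lerchC n = ∅ := by
  rw [Finset.eq_empty_iff_forall_notMem]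
  intro x hx
  simp only [lerchC, Finset.mem_filter, Finset.mem_range] at hx
  obtain ⟨_, hx0, heq⟩ := hx
  have h2 : p ∣ 2 * x ^ 2 := ⟨k, by rw [← heq]; exact hn⟩
  rcases hp.dvd_mul.mp h2 with h | h
  · have := Nat.le_of_dvd (by omega) h
    omega
  · obtain ⟨t, rfl⟩ := hp.dvd_of_dvd_pow h
    have hkk : k = p * (2 * t * t) := by
      have : p * k = p * (p * (2 * t * t)) := by rw [← hn, heq]; ring
      exact Nat.eq_of_mul_eq_mul_left hp.pos this
    exact hk ⟨2 * t * t, hkk⟩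

/-- If `p` is an odd prime, then `h(p(p+1)) = 2` and `h((p-1)p) = 2`. -/
theorem h_prime_times_neighbor (p : ℕ) (hp : p.Prime) (hodd : Odd p) :
    lerchh (p * (p + 1)) = 2 ∧ lerchh ((p - 1) * p) = 2 := by
  have h3 : 3 ≤ p := by
    have h2 := hp.two_le
    rcases Nat.lt_or_ge p 3 with h | h
    · interval_cases p
      · simp [Nat.odd_iff] at hodd
    · exact h
  have hnd1 : ¬ p ∣ p + 1 := by
    intro h
    have := (Nat.dvd_add_right (dvd_refl p)).mp h
    have := Nat.le_of_dvd one_pos this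
    omega
  have hnd2 : ¬ p ∣ p - 1 := by
    intro h
    have := Nat.le_of_dvd (by omega) h
    omega
  constructor
  · rw [lerchh, lerchA_eq₁ p hp h3,
      lerchB_empty p _ (p + 1) hp h3 rfl hnd1 (le_refl _),
      lerchC_empty p _ (p + 1) hp h3 rfl hnd1]
    simp
  · rw [lerchh, lerchA_eq₂ p hp h3,
      lerchB_empty p _ (p - 1) hp h3 (mul_comm _ _) hnd2 (by omega),
      lerchC_empty p _ (p - 1) hp h3 (mul_comm _ _) hnd2]
    simp
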